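/- arXiv:2210.15152 — 4 statements merged into one kernel-verified Lean document; each statement's English description precedes it below -/
import Mathlib

section
/- Suppose A is Hurwitz and matrices X, K_r satisfy the regulator equations X A_r = A X + B K_r + B K_t X and C X = C_r, where A + B K_t is Hurwitz. Then for the closed-loop system x' = (A + B K_t) x + B K_r x_r, x_r' = A_r x_r, the error e = C x − C_r x_r satisfies e(t) → 0 as t → ∞ for all initial conditions, since ξ = x − X x_r obeys ξ' = (A + B K_t) ξ and e = C ξ. -/
open Matrix Filter Topology

def IsHurwitz {n : Type*} [Fintype n] [DecidableEq n] (A : Matrix n n ℝ) : Prop :=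
  ∀ μ ∈ spectrum ℂ (A.map Complex.ofReal), μ.re < 0

lemma pow_mul_exp_tendsto_zero (k : ℕ) {b : ℝ} (hb : b < 0) :
    Tendsto (fun t : ℝ => t ^ k * Real.exp (b * t)) atTop (𝓝 0) := by
  have h1 : Tendsto (fun t : ℝ => -b * t) atTop atTop :=
    Tendsto.const_mul_atTop (neg_pos.2 hb) tendsto_id
  have h2 := ((Real.tendsto_pow_mul_exp_neg_atTop_nhds_zero k)).comp h1
  have h3 := h2.const_mul (((-b) ^ k)⁻¹)
  rw [mul_zero] at h3
  refine h3.congr fun t => ?_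
  have hbk : (-b) ^ k ≠ 0 := pow_ne_zero _ (by linarith)
  simp only [Function.comp]
  rw [mul_pow, neg_mul, neg_neg, mul_assoc, ← mul_assoc, inv_mul_cancel₀ hbk, one_mul]

lemma mode_solution {E : Type*} [NormedAddCommGroup E] [NormedSpace ℂ E]
    (f : Module.End ℂ E) (μ : ℂ) (v : E) (k : ℕ)
    (hv : ((f - μ • 1) ^ k) v = 0) :
    ∃ u : ℝ → E, (∀ t, HasDerivAt u (f (u t)) t) ∧ u 0 = v ∧
      (μ.re < 0 → Tendsto u atTop (𝓝 0)) := by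
  set g : Module.End ℂ E := f - μ • 1 with hgdef
  set p : ℝ → E := fun t => ∑ j ∈ Finset.range (k + 1),
      (((t : ℂ) ^ j / (Nat.factorial j : ℂ)) • (g ^ j) v) with hpdef
  refine ⟨fun t => Complex.exp (μ * t) • p t, ?_, ?_, ?_⟩
  · intro t
    have hid : HasDerivAt (fun s : ℝ => (s : ℂ)) 1 t := by
      simpa using (hasDerivAt_id t).ofReal_comp
    have hexp : HasDerivAt (fun s : ℝ => Complex.exp (μ * s))
        (Complex.exp (μ * t) * (μ * 1)) t := (hid.const_mul μ).cexp
    have hp : HasDerivAt p (∑ j ∈ Finset.range (k + 1),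
        (((j : ℂ) * (t : ℂ) ^ (j - 1) * 1 / (Nat.factorial j : ℂ)) • (g ^ j) v)) t := by
      refine HasDerivAt.fun_sum fun j _ => ?_
      have hpow : HasDerivAt (fun s : ℝ => ((s : ℂ)) ^ j)
          ((j : ℂ) * (t : ℂ) ^ (j - 1) * 1) t := by
        simpa using (hasDerivAt_pow j ((t : ℝ) : ℂ)).comp_ofReal
      exact (hpow.div_const ((Nat.factorial j : ℂ))).smul_const ((g ^ j) v)
    have hgk : (g ^ (k + 1)) v = 0 := by
      rw [pow_succ', Module.End.mul_apply, hv, map_zero]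
    have key : (∑ j ∈ Finset.range (k + 1),
        (((j : ℂ) * (t : ℂ) ^ (j - 1) * 1 / (Nat.factorial j : ℂ)) • (g ^ j) v)) = g (p t) := by
      have hrhs : g (p t) = ∑ j ∈ Finset.range (k + 1),
          (((t : ℂ) ^ j / (Nat.factorial j : ℂ)) • (g ^ (j + 1)) v) := by
        rw [hpdef, map_sum]
        refine Finset.sum_congr rfl fun j _ => ?_
        rw [LinearMap.map_smul, pow_succ', Module.End.mul_apply]
      have h2 : g (p t) = ∑ i ∈ Finset.range k,
          (((t : ℂ) ^ i / (Nat.factorial i : ℂ)) • (g ^ (i + 1)) v) := by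
        rw [hrhs, Finset.sum_range_succ, hgk, smul_zero, add_zero]
      rw [h2, Finset.sum_range_succ']
      simp only [Nat.cast_zero, zero_mul, zero_div, zero_smul, add_zero]
      refine Finset.sum_congr rfl fun i _ => ?_
      congr 1
      rw [Nat.add_sub_cancel, Nat.factorial_succ, mul_one]
      push_cast
      exact mul_div_mul_left _ _ (by exact_mod_cast (Nat.cast_add_one_ne_zero i : ((i : ℂ) + 1) ≠ 0))
    have := hexp.smul hp
    rw [key] at this
    convert this using 1
    · rfl
    have hf : ∀ w : E, f w = μ • w + g w := by
      intro w
      simp [hgdef]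
    rw [hf]
    simp only [LinearMap.map_smul, mul_one]
    module
  · simp [hpdef, Finset.sum_range_succ']
  · intro hre
    have : (fun t : ℝ => Complex.exp (μ * t) • p t) = fun t : ℝ =>
        ∑ j ∈ Finset.range (k + 1),
          Complex.exp (μ * t) • (((t : ℂ) ^ j / (Nat.factorial j : ℂ)) • (g ^ j) v) := by
      funext t
      rw [hpdef, Finset.smul_sum]
    rw [this]
    rw [show (0 : E) = ∑ _j ∈ Finset.range (k + 1), (0 : E) by simp]
    refine tendsto_finset_sum _ fun j _ => ?_
    apply squeeze_zero_norm' (a := fun t : ℝ =>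
      (‖(g ^ j) v‖ / (Nat.factorial j : ℝ)) * (t ^ j * Real.exp (μ.re * t)))
    · filter_upwards [eventually_ge_atTop (0 : ℝ)] with t ht
      rw [norm_smul, norm_smul, Complex.norm_exp]
      have h1 : (μ * (t : ℂ)).re = μ.re * t := by simp
      have h2 : ‖((t : ℂ) ^ j / (Nat.factorial j : ℂ))‖ = t ^ j / (Nat.factorial j : ℝ) := by
        rw [norm_div]
        simp [Complex.norm_natCast, norm_pow, Complex.norm_real, Real.norm_eq_abs,
          abs_of_nonneg ht]
      rw [h1, h2]
      ring_nf
      apply le_of_eq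
      ring
    · have := (pow_mul_exp_tendsto_zero j hre).const_mul (‖(g ^ j) v‖ / (Nat.factorial j : ℝ))
      rw [mul_zero] at this
      exact this.congr fun t => by ring

lemma tendsto_zero_of_matrix_ode {n : ℕ} (M : Matrix (Fin n) (Fin n) ℂ)
    (hM : ∀ μ ∈ spectrum ℂ M, μ.re < 0)
    (z : ℝ → Fin n → ℂ) (hz : ∀ t, HasDerivAt z (M.mulVec (z t)) t) :
    Tendsto z atTop (𝓝 0) := by
  classical
  set f : Module.End ℂ (Fin n → ℂ) := Matrix.mulVecLin M with hfdef
  have hfapp : ∀ w : Fin n → ℂ, f w = M.mulVec w := fun w => rfl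
  have hspec : ∀ μ : ℂ, f.HasEigenvalue μ → μ.re < 0 := by
    intro μ hμ
    apply hM
    have h1 : μ ∈ spectrum ℂ f := Module.End.hasEigenvalue_iff_mem_spectrum.mp hμ
    have h2 : f = Matrix.toLinAlgEquiv' M := by
      apply LinearMap.ext fun w => ?_
      simp [hfapp]
    rwa [h2, AlgEquiv.spectrum_eq] at h1
  have htop := Module.End.iSup_maxGenEigenspace_eq_top f
  have hz0 : z 0 ∈ ⨆ μ : ℂ, f.maxGenEigenspace μ := by
    rw [htop]; trivial
  obtain ⟨c, hc, hsum⟩ := (Submodule.mem_iSup_iff_exists_finsupp _ _).mp hz0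
  have hmode : ∀ μ : ℂ, ∃ u : ℝ → Fin n → ℂ,
      (∀ t, HasDerivAt u (f (u t)) t) ∧ u 0 = c μ ∧ Tendsto u atTop (𝓝 0) := by
    intro μ
    by_cases h0 : c μ = 0
    · refine ⟨fun _ => 0, fun t => ?_, h0.symm, tendsto_const_nhds⟩
      simpa using hasDerivAt_const t (0 : Fin n → ℂ)
    · obtain ⟨k, hk⟩ := (Module.End.mem_maxGenEigenspace f μ (c μ)).mp (hc μ)
      obtain ⟨u, hu1, hu2, hu3⟩ := mode_solution f μ (c μ) k hk
      refine ⟨u, hu1, hu2, hu3 (hspec μ ?_)⟩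
      refine Module.End.hasEigenvalue_of_hasGenEigenvalue (k := k) ?_
      rw [Module.End.hasGenEigenvalue_iff]
      refine (Submodule.ne_bot_iff _).mpr ⟨c μ, ?_, h0⟩
      rw [Module.End.mem_genEigenspace_nat, LinearMap.mem_ker]
      exact hk
  choose u hud hu0 hut using hmode
  set U : ℝ → Fin n → ℂ := fun t => ∑ μ ∈ c.support, u μ t with hUdef
  have hU : ∀ t, HasDerivAt U (M.mulVec (U t)) t := by
    intro t
    have h1 : HasDerivAt U (∑ μ ∈ c.support, f (u μ t)) t :=
      HasDerivAt.fun_sum fun μ _ => hud μ t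
    have h2 : (∑ μ ∈ c.support, f (u μ t)) = M.mulVec (U t) := by
      rw [← hfapp, hUdef, map_sum]
    rwa [h2] at h1
  have hU0 : U 0 = z 0 := by
    rw [hUdef]
    simp only [hu0]
    rw [← hsum]
    rfl
  have heq : ∀ t : ℝ, 0 ≤ t → z t = U t := by
    intro b hb
    set L := LinearMap.toContinuousLinearMap (Matrix.mulVecLin M) with hLdef
    have hlip : ∀ s : ℝ, LipschitzWith ‖L‖₊ (fun y : Fin n → ℂ => M.mulVec y) := by
      intro s
      have : (fun y : Fin n → ℂ => M.mulVec y) = ⇑L := by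
        funext y
        simp [hLdef]
      rw [this]
      exact L.lipschitz
    have := ODE_solution_unique (v := fun _ : ℝ => fun y : Fin n → ℂ => M.mulVec y)
      (K := ‖L‖₊) (f := z) (g := U) (a := 0) (b := b) hlip
      (fun t _ => (hz t).continuousAt.continuousWithinAt)
      (fun t _ => (hz t).hasDerivWithinAt)
      (fun t _ => (hU t).continuousAt.continuousWithinAt)
      (fun t _ => (hU t).hasDerivWithinAt)
      hU0.symm
    exact this ⟨hb, le_refl b⟩
  have hUt : Tendsto U atTop (𝓝 0) := by
    rw [show (0 : Fin n → ℂ) = ∑ _μ ∈ c.support, (0 : Fin n → ℂ) by simp]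
    exact tendsto_finset_sum _ fun μ _ => hut μ
  refine hUt.congr' ?_
  filter_upwards [eventually_ge_atTop (0 : ℝ)] with t ht
  exact (heq t ht).symm

/-- Output regulation: if the regulator equations hold and `A + B Kₜ` is Hurwitz,
the tracking error of the closed loop tends to zero; indeed `ξ = x - X x_r`
obeys `ξ' = (A + B Kₜ) ξ` and `e = C ξ`. -/
theorem regulator_error_tendsto_zero {n m p q : ℕ}
    (A : Matrix (Fin n) (Fin n) ℝ) (B : Matrix (Fin n) (Fin m) ℝ)
    (C : Matrix (Fin p) (Fin n) ℝ)
    (Ar : Matrix (Fin q) (Fin q) ℝ) (Cr : Matrix (Fin p) (Fin q) ℝ)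
    (Kt : Matrix (Fin m) (Fin n) ℝ) (Kr : Matrix (Fin m) (Fin q) ℝ)
    (X : Matrix (Fin n) (Fin q) ℝ)
    (hA : IsHurwitz A) (hcl : IsHurwitz (A + B * Kt))
    (hreg1 : X * Ar = A * X + B * Kr + B * Kt * X)
    (hreg2 : C * X = Cr)
    (x : ℝ → Fin n → ℝ) (xr : ℝ → Fin q → ℝ)
    (hx : ∀ t : ℝ, HasDerivAt x ((A + B * Kt).mulVec (x t) + (B * Kr).mulVec (xr t)) t)
    (hxr : ∀ t : ℝ, HasDerivAt xr (Ar.mulVec (xr t)) t) :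
    Tendsto (fun t => C.mulVec (x t) - Cr.mulVec (xr t)) atTop (𝓝 0) ∧
    (∀ t : ℝ, HasDerivAt (fun s => x s - X.mulVec (xr s))
      ((A + B * Kt).mulVec (x t - X.mulVec (xr t))) t) ∧
    (∀ t : ℝ, C.mulVec (x t) - Cr.mulVec (xr t) = C.mulVec (x t - X.mulVec (xr t))) := by
  set Acl : Matrix (Fin n) (Fin n) ℝ := A + B * Kt with hAcl
  set ξ : ℝ → Fin n → ℝ := fun s => x s - X.mulVec (xr s) with hξdef
  have hξ : ∀ t : ℝ, HasDerivAt ξ (Acl.mulVec (ξ t)) t := by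
    intro t
    have h2 : HasDerivAt (fun s => X.mulVec (xr s)) (X.mulVec (Ar.mulVec (xr t))) t := by
      have := ((Matrix.mulVecLin X).toContinuousLinearMap.hasFDerivAt
        (x := xr t)).comp_hasDerivAt t (hxr t)
      simpa [Function.comp_def] using this
    have h3 := (hx t).sub h2
    have halg : Acl.mulVec (x t) + (B * Kr).mulVec (xr t) - X.mulVec (Ar.mulVec (xr t))
        = Acl.mulVec (ξ t) := by
      rw [Matrix.mulVec_mulVec, hreg1, hξdef]
      simp only [Matrix.mulVec_sub, Matrix.mulVec_mulVec, Matrix.add_mulVec, hAcl,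
        Matrix.add_mul]
      abel
    rwa [halg] at h3
  have herr : ∀ t : ℝ, C.mulVec (x t) - Cr.mulVec (xr t) = C.mulVec (ξ t) := by
    intro t
    rw [hξdef]
    rw [Matrix.mulVec_sub, Matrix.mulVec_mulVec, hreg2]
  set M : Matrix (Fin n) (Fin n) ℂ := Acl.map Complex.ofReal with hMdef
  set z : ℝ → Fin n → ℂ := fun t i => ((ξ t i : ℝ) : ℂ) with hzdef
  have hz : ∀ t : ℝ, HasDerivAt z (M.mulVec (z t)) t := by
    intro t
    refine hasDerivAt_pi.2 fun i => ?_
    have hco := hasDerivAt_pi.1 (hξ t) i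
    have h1 := hco.ofReal_comp
    have h2 : (M.mulVec (z t)) i = ((Acl.mulVec (ξ t) i : ℝ) : ℂ) := by
      simp only [hMdef, hzdef, Matrix.mulVec, dotProduct, Matrix.map_apply]
      push_cast
      rfl
    rw [h2]
    exact h1
  have hztends : Tendsto z atTop (𝓝 0) := tendsto_zero_of_matrix_ode M hcl z hz
  have hξtends : Tendsto ξ atTop (𝓝 0) := by
    refine tendsto_pi_nhds.2 fun i => ?_
    have := (Complex.continuous_re.tendsto 0).comp (tendsto_pi_nhds.1 hztends i)
    simpa [hzdef, Function.comp_def] using this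
  refine ⟨?_, hξ, herr⟩
  have hC : Tendsto (fun t => C.mulVec (ξ t)) atTop (𝓝 0) := by
    have hcont := ((Matrix.mulVecLin C).toContinuousLinearMap.continuous.tendsto 0).comp hξtends
    simpa [Function.comp_def] using hcont
  refine hC.congr fun t => (herr t).symm
end

section
/- Let ẽ' = Ã ẽ with Ã = [[A+BK, −LC],[0, A+LC]] for the coordinates ẽ = (x̂ − X x_r, x − x̂), where observer x̂' = A x̂ + B u − L(y − C x̂), plant x' = A x + B u, y = C x, u = K x̂ + K_r x̂_r, and (X, K_r) solve the regulator equations X A_r = A X + B K_r + B K X, C X = C_r. If A+BK, A+LC, and A_r+L_rC_r are Hurwitz, then the tracking error e = C x − C_r x_r converges to 0 for all initial conditions (Theorem 1, output regulation via observer-based feedback). -/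
open Matrix Filter Topology

section Auxiliary

open Polynomial

/-- Derivative of the squared norm of a complex solution of a scalar linear ODE. -/
lemma normSq_hasDerivAt (x g : ℝ → ℂ) (lam : ℂ) (t : ℝ)
    (hx : HasDerivAt x (lam * x t + g t) t) :
    HasDerivAt (fun s => Complex.normSq (x s))
      (2 * lam.re * Complex.normSq (x t) + 2 * ((starRingEnd ℂ) (x t) * g t).re) t := by
  have hxre : HasDerivAt (fun s => (x s).re) (lam * x t + g t).re t :=
    Complex.reCLM.hasFDerivAt.comp_hasDerivAt t hx
  have hxim : HasDerivAt (fun s => (x s).im) (lam * x t + g t).im t :=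
    Complex.imCLM.hasFDerivAt.comp_hasDerivAt t hx
  have h := ((hxre.mul hxre).add (hxim.mul hxim))
  have hfun : (fun s => (x s).re * (x s).re + (x s).im * (x s).im)
      = fun s => Complex.normSq (x s) := by
    funext s; simp [Complex.normSq_apply]
  have hval : (lam * x t + g t).re * (x t).re + (x t).re * (lam * x t + g t).re
      + ((lam * x t + g t).im * (x t).im + (x t).im * (lam * x t + g t).im)
      = 2 * lam.re * Complex.normSq (x t) + 2 * ((starRingEnd ℂ) (x t) * g t).re := by
    simp [Complex.normSq_apply, Complex.add_re, Complex.add_im, Complex.mul_re,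
      Complex.mul_im, Complex.conj_re, Complex.conj_im]
    ring
  rw [hval] at h
  rw [show (fun s => Complex.normSq (x s)) = ((fun s => (x s).re) * fun s => (x s).re) + (fun s => (x s).im) * fun s => (x s).im from by funext s; simp [Complex.normSq_apply]]
  exact h

/-- Scalar complex ODE: `x' = λ x + g` with `Re λ < 0` and `g → 0` implies `x → 0`. -/
lemma scalar_ode_tendsto_zero (lam : ℂ) (hlam : lam.re < 0)
    (x g : ℝ → ℂ) (hx : ∀ t, HasDerivAt x (lam * x t + g t) t)
    (hg : Tendsto g atTop (𝓝 0)) : Tendsto x atTop (𝓝 0) := by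
  obtain ⟨c, hcpos, hlamre⟩ : ∃ c : ℝ, 0 < c ∧ lam.re = -c :=
    ⟨-lam.re, by linarith, by ring⟩
  set u : ℝ → ℝ := fun t => Complex.normSq (x t) with hu
  have hud : ∀ t, HasDerivAt u (2 * lam.re * u t + 2 * ((starRingEnd ℂ) (x t) * g t).re) t :=
    fun t => normSq_hasDerivAt x g lam t (hx t)
  rw [Metric.tendsto_atTop]
  intro ε hε
  have hδ : (0:ℝ) < c * ε / 2 := by positivity
  obtain ⟨T₀, hT₀⟩ := (Metric.tendsto_atTop.mp hg) (c * ε / 2) hδ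
  have hgb : ∀ t ≥ T₀, ‖g t‖ ≤ c * ε / 2 := by
    intro t ht
    have := hT₀ t ht
    rw [dist_zero_right] at this
    exact this.le
  set φ : ℝ → ℝ := fun s => Real.exp (c * s) * (u s - ε ^ 2 / 4) with hφdef
  have hφd : ∀ s, HasDerivAt φ
      (c * Real.exp (c * s) * (u s - ε ^ 2 / 4)
        + Real.exp (c * s) * (2 * lam.re * u s + 2 * ((starRingEnd ℂ) (x s) * g s).re)) s := by
    intro s
    have he : HasDerivAt (fun s : ℝ => Real.exp (c * s)) (c * Real.exp (c * s)) s := by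
      have := ((hasDerivAt_id s).const_mul c).exp
      simpa [mul_comm] using this
    exact he.mul ((hud s).sub_const (ε ^ 2 / 4))
  have hφmono : AntitoneOn φ (Set.Ici T₀) := by
    apply antitoneOn_of_deriv_nonpos (convex_Ici T₀)
    · exact fun s _ => ((hφd s).continuousAt).continuousWithinAt
    · exact fun s _ => ((hφd s).differentiableAt).differentiableWithinAt
    · intro s hs
      rw [interior_Ici] at hs
      rw [(hφd s).deriv]
      have hre : 2 * ((starRingEnd ℂ) (x s) * g s).re ≤ c * u s + c * ε ^ 2 / 4 := by
        have h1 : ((starRingEnd ℂ) (x s) * g s).re ≤ ‖x s‖ * ‖g s‖ := by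
          calc ((starRingEnd ℂ) (x s) * g s).re ≤ ‖(starRingEnd ℂ) (x s) * g s‖ :=
                Complex.re_le_norm _
            _ = ‖x s‖ * ‖g s‖ := by
                simp [_root_.map_mul, Complex.norm_conj]
        have h2 : ‖g s‖ ≤ c * ε / 2 := hgb s (le_of_lt hs)
        have h3 : ‖x s‖ ^ 2 = u s := by
          simp [hu, Complex.sq_norm]
        have hb2 : ‖g s‖ ^ 2 ≤ (c * ε / 2) ^ 2 := by
          nlinarith [norm_nonneg (g s)]
        have key : c * (2 * (‖x s‖ * ‖g s‖)) ≤ c ^ 2 * ‖x s‖ ^ 2 + ‖g s‖ ^ 2 := by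
          nlinarith [sq_nonneg (c * ‖x s‖ - ‖g s‖)]
        have h3' : c ^ 2 * ‖x s‖ ^ 2 = c ^ 2 * u s := by rw [h3]
        have h4 := mul_le_mul_of_nonneg_left h1 (by positivity : (0:ℝ) ≤ 2 * c)
        have h5 : c * (2 * ((starRingEnd ℂ) (x s) * g s).re)
            ≤ c * (c * u s + c * ε ^ 2 / 4) := by nlinarith
        exact le_of_mul_le_mul_left h5 hcpos
      have hexp : (0:ℝ) < Real.exp (c * s) := Real.exp_pos _
      rw [hlamre]
      nlinarith [hexp, mul_le_mul_of_nonneg_left hre hexp.le]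
  set Kc : ℝ := Real.exp (c * T₀) * |u T₀ - ε ^ 2 / 4| with hKc
  have hub : ∀ t ≥ T₀, u t ≤ ε ^ 2 / 4 + Real.exp (-(c * t)) * Kc := by
    intro t ht
    have h1 : φ t ≤ φ T₀ := hφmono Set.self_mem_Ici ht ht
    have h2 : φ T₀ ≤ Kc := by
      rw [hKc, hφdef]
      have := le_abs_self (u T₀ - ε ^ 2 / 4)
      nlinarith [Real.exp_pos (c * T₀)]
    have h3 : Real.exp (c * t) * (u t - ε ^ 2 / 4) ≤ Kc := le_trans h1 h2
    have h4 : (0:ℝ) < Real.exp (c * t) := Real.exp_pos _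
    have h5 : Real.exp (-(c * t)) * Real.exp (c * t) = 1 := by
      rw [← Real.exp_add]; simp
    have h6 := mul_le_mul_of_nonneg_left h3 (Real.exp_pos (-(c * t))).le
    rw [← mul_assoc, h5, one_mul] at h6
    linarith
  have htail : Tendsto (fun t => Real.exp (-(c * t)) * Kc) atTop (𝓝 0) := by
    have h1 : Tendsto (fun t : ℝ => c * t) atTop atTop :=
      Tendsto.const_mul_atTop hcpos tendsto_id
    have h2 : Tendsto (fun t : ℝ => Real.exp (-(c * t))) atTop (𝓝 0) :=
      (Real.tendsto_exp_neg_atTop_nhds_zero).comp h1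
    simpa using h2.mul_const Kc
  have hev : ∀ᶠ t in atTop, Real.exp (-(c * t)) * Kc < ε ^ 2 / 4 := by
    have : (0:ℝ) < ε ^ 2 / 4 := by positivity
    exact (htail.eventually (eventually_lt_nhds this)).mono (fun t ht => ht)
  rw [eventually_atTop] at hev
  obtain ⟨T₁, hT₁⟩ := hev
  refine ⟨max T₀ T₁, fun t ht => ?_⟩
  have ht₀ : T₀ ≤ t := le_trans (le_max_left _ _) ht
  have ht₁ : T₁ ≤ t := le_trans (le_max_right _ _) ht
  have : u t < ε ^ 2 / 2 := by
    have := hub t ht₀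
    have := hT₁ t ht₁
    linarith
  rw [dist_zero_right]
  have h3 : ‖x t‖ ^ 2 = u t := by simp [hu, Complex.sq_norm]
  nlinarith [norm_nonneg (x t)]

/-- Derivative of `t ↦ M *ᵥ v t`. -/
lemma hasDerivAt_mulVec {𝔸 : Type*} [NormedCommRing 𝔸] [NormedAlgebra ℝ 𝔸]
    {k l : ℕ} (M : Matrix (Fin k) (Fin l) 𝔸)
    (v : ℝ → Fin l → 𝔸) (v' : Fin l → 𝔸) (t : ℝ) (hv : HasDerivAt v v' t) :
    HasDerivAt (fun s => M.mulVec (v s)) (M.mulVec v') t := by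
  refine hasDerivAt_pi.mpr fun i => ?_
  simp only [Matrix.mulVec, dotProduct]
  exact HasDerivAt.fun_sum fun j _ => ((hasDerivAt_pi.mp hv) j).const_mul (M i j)

lemma prod_factors_comm {k : ℕ} (M : Matrix (Fin k) (Fin k) ℂ) (l : List ℂ) :
    (l.map (fun μ => M - μ • 1)).prod * M = M * (l.map (fun μ => M - μ • 1)).prod := by
  induction l with
  | nil => simp
  | cons μ l ih =>
    simp only [List.map_cons, List.prod_cons, mul_assoc, ih]
    rw [← mul_assoc, ← mul_assoc]
    congr 1
    simp [sub_mul, mul_sub, Matrix.smul_mul, Matrix.mul_smul]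

lemma mulVec_continuous {R : Type*} [CommRing R] [TopologicalSpace R] [IsTopologicalRing R]
    {k l : ℕ} (M : Matrix (Fin k) (Fin l) R) :
    Continuous fun w : Fin l → R => M.mulVec w :=
  LinearMap.continuous_on_pi (Matrix.mulVecLin M)

/-- Cascade lemma: if the product of factors `M - μ•1` over a list of eigenvalues with
negative real parts annihilates the solution in the limit, the solution tends to zero. -/
lemma cascade {k : ℕ} (M : Matrix (Fin k) (Fin k) ℂ) (l : List ℂ)
    (hl : ∀ μ ∈ l, μ.re < 0) (v f : ℝ → Fin k → ℂ)
    (hv : ∀ t, HasDerivAt v (M.mulVec (v t) + f t) t)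
    (hf : Tendsto f atTop (𝓝 0))
    (hprod : Tendsto (fun t => ((l.map (fun μ => M - μ • 1)).prod).mulVec (v t)) atTop (𝓝 0)) :
    Tendsto v atTop (𝓝 0) := by
  induction l with
  | nil => simpa using hprod
  | cons μ l ih =>
    set P : Matrix (Fin k) (Fin k) ℂ := (l.map (fun μ => M - μ • 1)).prod with hP
    set z : ℝ → Fin k → ℂ := fun t => P.mulVec (v t) with hz
    have hzd : ∀ t, HasDerivAt z (μ • z t + ((M - μ • 1).mulVec (z t) + P.mulVec (f t))) t := by
      intro t
      have h := hasDerivAt_mulVec P v _ t (hv t)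
      have hval : P.mulVec (M.mulVec (v t) + f t)
          = μ • z t + ((M - μ • 1).mulVec (z t) + P.mulVec (f t)) := by
        rw [Matrix.mulVec_add, Matrix.mulVec_mulVec, prod_factors_comm,
          ← Matrix.mulVec_mulVec]
        have : M.mulVec (P.mulVec (v t)) = μ • z t + (M - μ • 1).mulVec (z t) := by
          rw [hz]
          have : M = μ • (1 : Matrix (Fin k) (Fin k) ℂ) + (M - μ • 1) := by abel
          nth_rewrite 1 [this]
          rw [Matrix.add_mulVec, Matrix.smul_mulVec, Matrix.one_mulVec]
        rw [this, add_assoc]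
      rwa [hval] at h
    have hzf : Tendsto (fun t => (M - μ • 1).mulVec (z t) + P.mulVec (f t)) atTop (𝓝 0) := by
      have h1 : Tendsto (fun t => (M - μ • 1).mulVec (z t)) atTop (𝓝 0) := by
        have : (fun t => (M - μ • 1).mulVec (z t))
            = fun t => (((μ :: l).map (fun μ => M - μ • 1)).prod).mulVec (v t) := by
          funext t
          simp only [List.map_cons, List.prod_cons, hz, ← Matrix.mulVec_mulVec, hP]
        rw [this]; exact hprod
      have h2 : Tendsto (fun t => P.mulVec (f t)) atTop (𝓝 0) := by
        have := ((mulVec_continuous P).tendsto 0).comp hf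
        simpa [Function.comp_def] using this
      simpa using h1.add h2
    have hz0 : Tendsto z atTop (𝓝 0) := by
      rw [tendsto_pi_nhds]
      intro i
      have := scalar_ode_tendsto_zero μ (hl μ (by simp))
        (fun t => z t i)
        (fun t => ((M - μ • 1).mulVec (z t) + P.mulVec (f t)) i)
        (fun t => by
          have := (hasDerivAt_pi.mp (hzd t)) i
          simpa [Pi.smul_apply, smul_eq_mul] using this)
        (by
          have := tendsto_pi_nhds.mp hzf i
          simpa using this)
      simpa using this
    exact ih (fun ν hν => hl ν (by simp [hν])) hz0

lemma eval_charpoly_det {k : ℕ} (M : Matrix (Fin k) (Fin k) ℂ) (μ : ℂ) :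
    M.charpoly.eval μ = (μ • (1 : Matrix (Fin k) (Fin k) ℂ) - M).det := by
  rw [Matrix.charpoly]
  rw [show Polynomial.eval μ (Matrix.charmatrix M).det
      = (Polynomial.evalRingHom μ) (Matrix.charmatrix M).det from rfl, RingHom.map_det]
  congr 1
  ext i j
  by_cases h : i = j
  · subst h
    simp [Matrix.charmatrix_apply_eq, Matrix.one_apply, Matrix.smul_apply, Matrix.sub_apply]
  · simp [Matrix.charmatrix_apply_ne _ _ _ h, Matrix.one_apply, h, Matrix.smul_apply,
      Matrix.sub_apply]

lemma root_mem_spectrum {k : ℕ} (M : Matrix (Fin k) (Fin k) ℂ) (μ : ℂ)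
    (h : M.charpoly.IsRoot μ) : μ ∈ spectrum ℂ M := by
  rw [spectrum.mem_iff]
  intro hunit
  have hdet := (Matrix.isUnit_iff_isUnit_det _).mp hunit
  rw [Algebra.algebraMap_eq_smul_one] at hdet
  rw [Polynomial.IsRoot, eval_charpoly_det] at h
  rw [h] at hdet
  exact hdet.ne_zero rfl

lemma charpoly_prod_factors_eq_zero {k : ℕ} (M : Matrix (Fin k) (Fin k) ℂ) :
    ((M.charpoly.roots.toList).map (fun μ => M - μ • 1)).prod = 0 := by
  have hmon := Matrix.charpoly_monic M
  have hsp := Polynomial.Splits.eq_prod_roots_of_monic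
    (IsAlgClosed.splits _) hmon
  have hlist : ((M.charpoly.roots.toList).map (fun μ => Polynomial.X - Polynomial.C μ)).prod
      = M.charpoly := by
    rw [← Multiset.prod_coe, ← Multiset.map_coe, Multiset.coe_toList, ← hsp]
  have haev := Matrix.aeval_self_charpoly M
  rw [← hlist] at haev
  rw [map_list_prod (Polynomial.aeval M : ℂ[X] →ₐ[ℂ] Matrix (Fin k) (Fin k) ℂ)] at haev
  rw [List.map_map] at haev
  rw [show (⇑(Polynomial.aeval M) ∘ fun μ => Polynomial.X - Polynomial.C μ) = fun μ => M - μ • 1 from by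
    funext μ
    simp [Function.comp, Algebra.algebraMap_eq_smul_one]] at haev
  exact haev

/-- A linear ODE `v' = M v + f` over `ℂ` with spectrum of `M` in the open left half-plane
and vanishing forcing has vanishing solutions. -/
lemma complex_hurwitz_ode {k : ℕ} (M : Matrix (Fin k) (Fin k) ℂ)
    (hM : ∀ μ ∈ spectrum ℂ M, μ.re < 0)
    (v f : ℝ → Fin k → ℂ)
    (hv : ∀ t, HasDerivAt v (M.mulVec (v t) + f t) t)
    (hf : Tendsto f atTop (𝓝 0)) : Tendsto v atTop (𝓝 0) := by
  refine cascade M M.charpoly.roots.toList ?_ v f hv hf ?_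
  · intro μ hμ
    exact hM μ (root_mem_spectrum M μ
      (Polynomial.isRoot_of_mem_roots ((Multiset.mem_toList).mp hμ)))
  · rw [charpoly_prod_factors_eq_zero M]
    simp only [Matrix.zero_mulVec]
    exact tendsto_const_nhds

/-- A linear ODE `v' = M v + f` with Hurwitz `M` and vanishing forcing has
vanishing solutions. -/
lemma real_hurwitz_ode {k : ℕ} (M : Matrix (Fin k) (Fin k) ℝ) (hM : IsHurwitz M)
    (v f : ℝ → Fin k → ℝ) (hv : ∀ t, HasDerivAt v (M.mulVec (v t) + f t) t)
    (hf : Tendsto f atTop (𝓝 0)) : Tendsto v atTop (𝓝 0) := by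
  set Mc : Matrix (Fin k) (Fin k) ℂ := M.map Complex.ofReal with hMc
  set V : ℝ → Fin k → ℂ := fun t i => (v t i : ℂ) with hV
  set F : ℝ → Fin k → ℂ := fun t i => (f t i : ℂ) with hF
  have hVd : ∀ t, HasDerivAt V (Mc.mulVec (V t) + F t) t := by
    intro t
    refine hasDerivAt_pi.mpr fun i => ?_
    have hcomp := ((hasDerivAt_pi.mp (hv t)) i).ofReal_comp
    have hval : (((M.mulVec (v t) + f t) i : ℝ) : ℂ) = (Mc.mulVec (V t) + F t) i := by
      simp only [Pi.add_apply, Matrix.mulVec, dotProduct, Matrix.map_apply,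
        hMc, hV, hF]
      push_cast
      ring
    rw [hval] at hcomp
    exact hcomp
  have hF0 : Tendsto F atTop (𝓝 0) := by
    rw [tendsto_pi_nhds] at hf ⊢
    intro i
    have := (Complex.continuous_ofReal.tendsto 0).comp (hf i)
    simpa [hF, Function.comp_def] using this
  have hV0 := complex_hurwitz_ode Mc hM V F hVd hF0
  rw [tendsto_pi_nhds] at hV0 ⊢
  intro i
  have := (Complex.continuous_re.tendsto 0).comp (hV0 i)
  simpa [hV, Function.comp_def] using this

end Auxiliary

/-- Theorem 1 (output regulation via observer-based feedback): with state
observer, exosystem observer, feedback `u = K x̂ + K_r x̂_r`, regulator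
equations, and Hurwitz `A+BK`, `A+LC`, `A_r+L_rC_r`, the tracking error
`e = C x − C_r x_r` tends to zero for all initial conditions. -/
theorem output_regulation_observer_feedback {n m p q : ℕ}
    (A : Matrix (Fin n) (Fin n) ℝ) (B : Matrix (Fin n) (Fin m) ℝ)
    (C : Matrix (Fin p) (Fin n) ℝ)
    (Ar : Matrix (Fin q) (Fin q) ℝ) (Cr : Matrix (Fin p) (Fin q) ℝ)
    (K : Matrix (Fin m) (Fin n) ℝ) (L : Matrix (Fin n) (Fin p) ℝ)
    (Lr : Matrix (Fin q) (Fin p) ℝ) (Kr : Matrix (Fin m) (Fin q) ℝ)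
    (X : Matrix (Fin n) (Fin q) ℝ)
    (hK : IsHurwitz (A + B * K)) (hL : IsHurwitz (A + L * C))
    (hLr : IsHurwitz (Ar + Lr * Cr))
    (hreg1 : X * Ar = A * X + B * Kr + B * K * X)
    (hreg2 : C * X = Cr)
    (x xh : ℝ → Fin n → ℝ) (xr xhr : ℝ → Fin q → ℝ)
    (u : ℝ → Fin m → ℝ)
    (hu : ∀ t, u t = K.mulVec (xh t) + Kr.mulVec (xhr t))
    (hx : ∀ t : ℝ, HasDerivAt x (A.mulVec (x t) + B.mulVec (u t)) t)
    (hxh : ∀ t : ℝ, HasDerivAt xh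
      (A.mulVec (xh t) + B.mulVec (u t)
        - L.mulVec (C.mulVec (x t) - C.mulVec (xh t))) t)
    (hxr : ∀ t : ℝ, HasDerivAt xr (Ar.mulVec (xr t)) t)
    (hxhr : ∀ t : ℝ, HasDerivAt xhr
      (Ar.mulVec (xhr t) - Lr.mulVec (Cr.mulVec (xr t) - Cr.mulVec (xhr t))) t) :
    Tendsto (fun t => C.mulVec (x t) - Cr.mulVec (xr t)) atTop (𝓝 0) := by
  -- exosystem observer error
  set er : ℝ → Fin q → ℝ := fun t => xr t - xhr t with her
  have herd : ∀ t, HasDerivAt er ((Ar + Lr * Cr).mulVec (er t) + 0) t := by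
    intro t
    have h := (hxr t).sub (hxhr t)
    have hval : Ar.mulVec (xr t)
        - (Ar.mulVec (xhr t) - Lr.mulVec (Cr.mulVec (xr t) - Cr.mulVec (xhr t)))
        = (Ar + Lr * Cr).mulVec (er t) + 0 := by
      simp only [her, Matrix.add_mulVec, Matrix.mulVec_sub, ← Matrix.mulVec_mulVec, add_zero]
      abel
    rwa [hval] at h
  have her0 : Tendsto er atTop (𝓝 0) :=
    real_hurwitz_ode _ hLr er (fun _ => 0) herd tendsto_const_nhds
  -- state observer error
  set eo : ℝ → Fin n → ℝ := fun t => x t - xh t with heo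
  have heod : ∀ t, HasDerivAt eo ((A + L * C).mulVec (eo t) + 0) t := by
    intro t
    have h := (hx t).sub (hxh t)
    have hval : A.mulVec (x t) + B.mulVec (u t)
        - (A.mulVec (xh t) + B.mulVec (u t) - L.mulVec (C.mulVec (x t) - C.mulVec (xh t)))
        = (A + L * C).mulVec (eo t) + 0 := by
      simp only [heo, Matrix.add_mulVec, Matrix.mulVec_sub, ← Matrix.mulVec_mulVec, add_zero]
      abel
    rwa [hval] at h
  have heo0 : Tendsto eo atTop (𝓝 0) :=
    real_hurwitz_ode _ hL eo (fun _ => 0) heod tendsto_const_nhds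
  -- regulation error
  set w : ℝ → Fin n → ℝ := fun t => x t - X.mulVec (xr t) with hw
  set fw : ℝ → Fin n → ℝ :=
    fun t => -((B * K).mulVec (eo t)) - (B * Kr).mulVec (er t) with hfw
  have hwd : ∀ t, HasDerivAt w ((A + B * K).mulVec (w t) + fw t) t := by
    intro t
    have h := (hx t).sub (hasDerivAt_mulVec X xr _ t (hxr t))
    have hval : A.mulVec (x t) + B.mulVec (u t) - X.mulVec (Ar.mulVec (xr t))
        = (A + B * K).mulVec (w t) + fw t := by
      have hXAr : X.mulVec (Ar.mulVec (xr t))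
          = A.mulVec (X.mulVec (xr t)) + B.mulVec (Kr.mulVec (xr t))
            + B.mulVec (K.mulVec (X.mulVec (xr t))) := by
        rw [Matrix.mulVec_mulVec, hreg1]
        simp only [Matrix.add_mulVec, ← Matrix.mulVec_mulVec]
      rw [hu t, hXAr]
      simp only [hw, hfw, heo, her, Matrix.add_mulVec, Matrix.mulVec_sub, Matrix.mulVec_add,
        ← Matrix.mulVec_mulVec]
      abel
    rwa [hval] at h
  have hfw0 : Tendsto fw atTop (𝓝 0) := by
    have h1 : Tendsto (fun t => (B * K).mulVec (eo t)) atTop (𝓝 0) := by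
      have := ((mulVec_continuous (B * K)).tendsto 0).comp heo0
      simpa [Function.comp_def] using this
    have h2 : Tendsto (fun t => (B * Kr).mulVec (er t)) atTop (𝓝 0) := by
      have := ((mulVec_continuous (B * Kr)).tendsto 0).comp her0
      simpa [Function.comp_def] using this
    have := (h1.neg).sub h2
    simpa [hfw] using this
  have hw0 : Tendsto w atTop (𝓝 0) := real_hurwitz_ode _ hK w fw hwd hfw0
  -- conclude
  have hkey : (fun t => C.mulVec (x t) - Cr.mulVec (xr t)) = fun t => C.mulVec (w t) := by
    funext t
    simp only [hw, Matrix.mulVec_sub, Matrix.mulVec_mulVec, hreg2]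
  rw [hkey]
  have := ((mulVec_continuous C).tendsto 0).comp hw0
  simpa [Function.comp_def] using this
end

section
/- If [[A − λI, B],[C, 0]] has full row rank n + p for every eigenvalue λ of A_r, and A + BK is Hurwitz while all eigenvalues of A_r have nonnegative real part, then the regulator equations X A_r = (A + BK) X + B K_r and C X = C_r admit a solution pair (X, K_r) for any C_r. -/
open Matrix

namespace RegulatorAux

lemma surj_of_rank {a b : Type*} [Fintype a] [Fintype b] (M : Matrix a b ℂ)
    (h : M.rank = Fintype.card a) : Function.Surjective M.mulVecLin := by
  rw [← LinearMap.range_eq_top]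
  apply Submodule.eq_top_of_finrank_eq
  rw [Matrix.rank] at h
  rw [h, Module.finrank_pi]

lemma vecMul_eq_zero {a b : Type*} [Fintype a] [Fintype b] [DecidableEq a]
    (M : Matrix a b ℂ) (h : Function.Surjective M.mulVecLin) {w : a → ℂ}
    (hw : w ᵥ* M = 0) : w = 0 := by
  funext i
  obtain ⟨u, hu⟩ := h (Pi.single i 1)
  have : w ⬝ᵥ (M *ᵥ u) = 0 := by rw [Matrix.dotProduct_mulVec, hw, zero_dotProduct]
  rw [Matrix.mulVecLin_apply] at hu
  rw [hu] at this
  simpa using this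

lemma spectrum_transpose {q : ℕ} (M : Matrix (Fin q) (Fin q) ℂ) :
    spectrum ℂ Mᵀ = spectrum ℂ M := by
  ext μ
  have hT : ((algebraMap ℂ (Matrix (Fin q) (Fin q) ℂ)) μ)ᵀ = algebraMap ℂ _ μ := by
    rw [Algebra.algebraMap_eq_smul_one, Matrix.transpose_smul, Matrix.transpose_one]
  rw [spectrum.mem_iff, spectrum.mem_iff, not_iff_not,
    Matrix.isUnit_iff_isUnit_det, Matrix.isUnit_iff_isUnit_det,
    ← Matrix.det_transpose (algebraMap ℂ _ μ - M), Matrix.transpose_sub, hT]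

section F
variable {a b c : Type*} [Fintype a] [Fintype b] [Fintype c]

noncomputable def Fp (M N : Matrix a b ℂ) : ℂ := Matrix.trace (Mᵀ * N)

lemma Fp_def (M N : Matrix a b ℂ) : Fp M N = ∑ i, ∑ j, M i j * N i j := by
  simp only [Fp, Matrix.trace, Matrix.diag, Matrix.mul_apply, Matrix.transpose_apply]
  rw [Finset.sum_comm]

lemma Fp_mul_left (P : Matrix a c ℂ) (X : Matrix c b ℂ) (N : Matrix a b ℂ) :
    Fp (P * X) N = Fp X (Pᵀ * N) := by
  rw [Fp, Fp, Matrix.transpose_mul, Matrix.mul_assoc]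

lemma Fp_mul_right (X : Matrix a c ℂ) (Q : Matrix c b ℂ) (N : Matrix a b ℂ) :
    Fp (X * Q) N = Fp X (N * Qᵀ) := by
  rw [Fp, Fp, Matrix.transpose_mul, Matrix.trace_mul_cycle, ← Matrix.mul_assoc,
    Matrix.trace_mul_cycle]

lemma Fp_sub (M M' N : Matrix a b ℂ) : Fp (M - M') N = Fp M N - Fp M' N := by
  simp [Fp, Matrix.transpose_sub, Matrix.sub_mul]

lemma Fp_single [DecidableEq a] [DecidableEq b] (i : a) (j : b) (N : Matrix a b ℂ) :
    Fp (Matrix.single i j 1) N = N i j := by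
  simp [Fp_def, Matrix.single, ite_and, Finset.sum_ite_eq]

lemma Fp_eq_zero {M : Matrix a b ℂ} [DecidableEq a] [DecidableEq b]
    (h : ∀ X : Matrix a b ℂ, Fp X M = 0) : M = 0 := by
  ext i j
  simpa [Fp_single] using h (Matrix.single i j 1)

end F

section more
variable {a b : Type*} [Fintype a] [Fintype b]

lemma Fp_add_right (M N N' : Matrix a b ℂ) : Fp M (N + N') = Fp M N + Fp M N' := by
  simp [Fp, Matrix.mul_add]

lemma Fp_sub_right (M N N' : Matrix a b ℂ) : Fp M (N - N') = Fp M N - Fp M N' := by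
  simp [Fp, Matrix.mul_sub]

lemma Fp_neg (M N : Matrix a b ℂ) : Fp (-M) N = -Fp M N := by
  simp [Fp]

lemma Fp_zero_left (N : Matrix a b ℂ) : Fp 0 N = 0 := by simp [Fp]

lemma Fp_zero_right (M : Matrix a b ℂ) : Fp M 0 = 0 := by simp [Fp]

end more

lemma francis_complex {n m p q : ℕ}
    (A : Matrix (Fin n) (Fin n) ℂ) (B : Matrix (Fin n) (Fin m) ℂ)
    (C : Matrix (Fin p) (Fin n) ℂ) (Ar : Matrix (Fin q) (Fin q) ℂ)
    (hrank : ∀ lam ∈ spectrum ℂ Ar,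
      (Matrix.fromBlocks (A - lam • 1) B C 0).rank = n + p)
    (Cr : Matrix (Fin p) (Fin q) ℂ) :
    ∃ (X : Matrix (Fin n) (Fin q) ℂ) (U : Matrix (Fin m) (Fin q) ℂ),
      X * Ar = A * X + B * U ∧ C * X = Cr := by
  set Φ : (Matrix (Fin n) (Fin q) ℂ × Matrix (Fin m) (Fin q) ℂ) →ₗ[ℂ]
      (Matrix (Fin n) (Fin q) ℂ × Matrix (Fin p) (Fin q) ℂ) :=
    { toFun := fun XU => (XU.1 * Ar - A * XU.1 - B * XU.2, C * XU.1)
      map_add' := fun x y => by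
        refine Prod.ext ?_ ?_ <;>
          simp [Matrix.add_mul, Matrix.mul_add] <;> abel
      map_smul' := fun c x => by
        refine Prod.ext ?_ ?_ <;>
          simp [Matrix.smul_mul, Matrix.mul_smul, smul_sub] } with hΦ
  suffices hs : Function.Surjective Φ by
    obtain ⟨⟨X, U⟩, hXU⟩ := hs (0, Cr)
    rw [hΦ, Prod.ext_iff] at hXU
    obtain ⟨h1, h2⟩ := hXU
    refine ⟨X, U, ?_, h2⟩
    have h1' : X * Ar - A * X - B * U = 0 := h1
    linear_combination (norm := noncomm_ring) h1'
  by_contra hns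
  rw [← LinearMap.range_eq_top] at hns
  obtain ⟨φ, hφ0, hφ⟩ := Submodule.exists_dual_map_eq_bot_of_lt_top
    (lt_top_iff_ne_top.mpr hns) inferInstance
  have hker : ∀ v, φ (Φ v) = 0 := fun v => by
    have hm : φ (Φ v) ∈ Submodule.map φ (LinearMap.range Φ) :=
      Submodule.mem_map_of_mem ⟨v, rfl⟩
    rw [hφ] at hm
    simpa using hm
  set Y : Matrix (Fin n) (Fin q) ℂ :=
    Matrix.of fun i j => φ (Matrix.single i j 1, 0) with hYdef
  set Z : Matrix (Fin p) (Fin q) ℂ :=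
    Matrix.of fun i j => φ (0, Matrix.single i j 1) with hZdef
  have hrep : ∀ (W : Matrix (Fin n) (Fin q) ℂ) (R : Matrix (Fin p) (Fin q) ℂ),
      φ (W, R) = Fp W Y + Fp R Z := by
    intro W R
    have hsplit : (W, R) = ((W, 0) : _ × Matrix (Fin p) (Fin q) ℂ) + (0, R) := by simp
    rw [hsplit, map_add]
    congr 1
    · have : ((W, (0 : Matrix (Fin p) (Fin q) ℂ)) :
          Matrix (Fin n) (Fin q) ℂ × Matrix (Fin p) (Fin q) ℂ) =
          ∑ i, ∑ j, (W i j) • ((Matrix.single i j 1, 0) :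
            Matrix (Fin n) (Fin q) ℂ × Matrix (Fin p) (Fin q) ℂ) := by
        refine Prod.ext ?_ ?_
        · simpa [Prod.fst_sum] using Matrix.matrix_eq_sum_single W
        · simp [Prod.snd_sum]
      rw [this, map_sum, Fp_def]
      refine Finset.sum_congr rfl fun i _ => ?_
      rw [map_sum]
      refine Finset.sum_congr rfl fun j _ => ?_
      rw [_root_.map_smul, smul_eq_mul]
      rfl
    · have : (((0 : Matrix (Fin n) (Fin q) ℂ), R) :
          Matrix (Fin n) (Fin q) ℂ × Matrix (Fin p) (Fin q) ℂ) =
          ∑ i, ∑ j, (R i j) • ((0, Matrix.single i j 1) :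
            Matrix (Fin n) (Fin q) ℂ × Matrix (Fin p) (Fin q) ℂ) := by
        refine Prod.ext ?_ ?_
        · simp [Prod.fst_sum]
        · simpa [Prod.snd_sum] using Matrix.matrix_eq_sum_single R
      rw [this, map_sum, Fp_def]
      refine Finset.sum_congr rfl fun i _ => ?_
      rw [map_sum]
      refine Finset.sum_congr rfl fun j _ => ?_
      rw [_root_.map_smul, smul_eq_mul]
      rfl
  have hYZ : Y * Arᵀ - Aᵀ * Y + Cᵀ * Z = 0 := by
    apply Fp_eq_zero
    intro X
    have h := hker (X, 0)
    rw [hΦ] at h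
    simp only [LinearMap.coe_mk, AddHom.coe_mk, Matrix.mul_zero, sub_zero] at h
    rw [hrep, Fp_sub, Fp_mul_right, Fp_mul_left, Fp_mul_left] at h
    rw [Fp_add_right, Fp_sub_right]
    linear_combination h
  have hBY : Bᵀ * Y = 0 := by
    apply Fp_eq_zero
    intro U
    have h := hker (0, U)
    rw [hΦ] at h
    simp only [LinearMap.coe_mk, AddHom.coe_mk, Matrix.mul_zero, Matrix.zero_mul,
      zero_sub, sub_zero] at h
    rw [hrep, Fp_neg, Fp_mul_left, Fp_zero_left] at h
    linear_combination -h
  set g : Module.End ℂ (Fin q → ℂ) := Matrix.mulVecLin Arᵀ with hg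
  have main : ∀ (μ : ℂ) (k : ℕ) (v : Fin q → ℂ), ((g - μ • 1) ^ k) v = 0 →
      Y *ᵥ v = 0 ∧ Z *ᵥ v = 0 := by
    intro μ
    by_cases hμ : μ ∈ spectrum ℂ Ar
    · have hcard : (Matrix.fromBlocks (A - μ • 1) B C 0).rank
          = Fintype.card (Fin n ⊕ Fin p) := by
        rw [hrank μ hμ]; simp
      have hsurj := surj_of_rank _ hcard
      intro k
      induction k with
      | zero =>
        intro v hv
        rw [pow_zero, Module.End.one_apply] at hv
        simp [hv]
      | succ k ih =>
        intro v hv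
        rw [pow_succ, Module.End.mul_apply] at hv
        obtain ⟨hYw, hZw⟩ := ih _ hv
        have hw : (g - μ • 1) v = Arᵀ *ᵥ v - μ • v := by
          simp [hg, Matrix.mulVecLin_apply, Matrix.mulVec_transpose]
        rw [hw] at hYw hZw
        have hYAr : Y *ᵥ (Arᵀ *ᵥ v) = μ • (Y *ᵥ v) := by
          rw [Matrix.mulVec_sub, Matrix.mulVec_smul, sub_eq_zero] at hYw
          exact hYw
        have e1 : μ • (Y *ᵥ v) - Aᵀ *ᵥ (Y *ᵥ v) + Cᵀ *ᵥ (Z *ᵥ v) = 0 := by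
          have := congrArg (fun M => M *ᵥ v) hYZ
          simpa [Matrix.sub_mulVec, Matrix.add_mulVec, ← Matrix.mulVec_mulVec,
            hYAr] using this
        have e2 : Bᵀ *ᵥ (Y *ᵥ v) = 0 := by
          have := congrArg (fun M => M *ᵥ v) hBY
          simpa [← Matrix.mulVec_mulVec] using this
        have hvm : (Sum.elim (Y *ᵥ v) (-(Z *ᵥ v))) ᵥ*
            (Matrix.fromBlocks (A - μ • 1) B C 0) = 0 := by
          rw [Matrix.vecMul_fromBlocks]
          simp only [Sum.elim_comp_inl, Sum.elim_comp_inr]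
          have c1 : (Y *ᵥ v) ᵥ* (A - μ • 1) + (-(Z *ᵥ v)) ᵥ* C = 0 := by
            rw [← Matrix.mulVec_transpose, ← Matrix.mulVec_transpose,
              Matrix.transpose_sub, Matrix.transpose_smul, Matrix.transpose_one,
              Matrix.sub_mulVec, Matrix.smul_mulVec, Matrix.one_mulVec,
              Matrix.mulVec_neg]
            linear_combination (norm := module) -e1
          have c2 : (Y *ᵥ v) ᵥ* B + (-(Z *ᵥ v)) ᵥ* (0 : Matrix (Fin p) (Fin m) ℂ)
              = 0 := by
            rw [← Matrix.mulVec_transpose, Matrix.vecMul_zero, add_zero, e2]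
          rw [c1, c2]
          simp
        have h0 := vecMul_eq_zero _ hsurj hvm
        constructor
        · funext i
          exact congrFun h0 (Sum.inl i)
        · funext i
          have := congrFun h0 (Sum.inr i)
          simpa [neg_eq_zero] using this
    · have hdet : IsUnit (μ • (1 : Matrix (Fin q) (Fin q) ℂ) - Arᵀ).det := by
        have hu : IsUnit (algebraMap ℂ (Matrix (Fin q) (Fin q) ℂ) μ - Ar) :=
          spectrum.notMem_iff.mp hμ
        rw [Matrix.isUnit_iff_isUnit_det] at hu
        have : (μ • (1 : Matrix (Fin q) (Fin q) ℂ) - Arᵀ).det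
            = (algebraMap ℂ (Matrix (Fin q) (Fin q) ℂ) μ - Ar).det := by
          rw [← Matrix.det_transpose (algebraMap ℂ _ μ - Ar), Matrix.transpose_sub,
            Algebra.algebraMap_eq_smul_one, Matrix.transpose_smul, Matrix.transpose_one]
        rw [this]
        exact hu
      have hinj : ∀ u : Fin q → ℂ, (g - μ • 1) u = 0 → u = 0 := by
        intro u hu
        have h1 : u ᵥ* Ar - μ • u = 0 := by
          simpa [hg, Matrix.mulVecLin_apply, Matrix.mulVec_transpose] using hu
        have hN : (μ • (1 : Matrix (Fin q) (Fin q) ℂ) - Arᵀ) *ᵥ u = 0 := by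
          rw [Matrix.sub_mulVec, Matrix.smul_mulVec, Matrix.one_mulVec,
            Matrix.mulVec_transpose]
          linear_combination (norm := module) -h1
        have := congrArg (fun w => (μ • (1 : Matrix (Fin q) (Fin q) ℂ) - Arᵀ)⁻¹ *ᵥ w) hN
        simpa [Matrix.mulVec_mulVec, Matrix.nonsing_inv_mul _ hdet] using this
      have hpow : ∀ (k : ℕ) (v : Fin q → ℂ), ((g - μ • 1) ^ k) v = 0 → v = 0 := by
        intro k
        induction k with
        | zero =>
          intro v hv
          rw [pow_zero, Module.End.one_apply] at hv
          exact hv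
        | succ k ih =>
          intro v hv
          rw [pow_succ, Module.End.mul_apply] at hv
          exact hinj v (ih _ hv)
      intro k v hv
      simp [hpow k v hv]
  have htop := Module.End.iSup_maxGenEigenspace_eq_top g
  have hall : ∀ v : Fin q → ℂ, Y *ᵥ v = 0 ∧ Z *ᵥ v = 0 := by
    intro v
    have hv : v ∈ (⨆ μ, g.maxGenEigenspace μ) := htop ▸ Submodule.mem_top
    refine Submodule.iSup_induction (motive := fun x => Y *ᵥ x = 0 ∧ Z *ᵥ x = 0) _ hv ?_ ?_ ?_
    · intro μ x hx
      rw [Module.End.mem_maxGenEigenspace] at hx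
      obtain ⟨k, hk⟩ := hx
      exact main μ k x hk
    · simp
    · intro x y hx hy
      refine ⟨?_, ?_⟩
      · rw [Matrix.mulVec_add, hx.1, hy.1, add_zero]
      · rw [Matrix.mulVec_add, hx.2, hy.2, add_zero]
  have hY0 : Y = 0 := by
    ext i j
    have h := congrFun (hall (Pi.single j 1)).1 i
    simpa [Matrix.mulVec_single] using h
  have hZ0 : Z = 0 := by
    ext i j
    have h := congrFun (hall (Pi.single j 1)).2 i
    simpa [Matrix.mulVec_single] using h
  apply hφ0
  apply LinearMap.ext
  rintro ⟨W, R⟩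
  rw [LinearMap.zero_apply, hrep W R, hY0, hZ0, Fp_zero_right, Fp_zero_right, add_zero]


lemma map_re_add {a b : Type*} (M N : Matrix a b ℂ) :
    (M + N).map Complex.re = M.map Complex.re + N.map Complex.re := by
  ext i j
  simp

lemma map_re_mul_right {a b c : Type*} [Fintype b] (X : Matrix a b ℂ) (R : Matrix b c ℝ) :
    (X * R.map (Complex.ofReal)).map Complex.re = X.map Complex.re * R := by
  ext i j
  simp [Matrix.mul_apply, Complex.mul_re, Complex.re_sum]

lemma map_re_mul_left {a b c : Type*} [Fintype b] (L : Matrix a b ℝ) (X : Matrix b c ℂ) :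
    (L.map (Complex.ofReal) * X).map Complex.re = L * X.map Complex.re := by
  ext i j
  simp [Matrix.mul_apply, Complex.mul_re, Complex.re_sum]


end RegulatorAux

open RegulatorAux in
/-- Solvability of the Francis (regulator) equations under the standard
non-resonance full-row-rank condition. -/
theorem regulator_equations_solvable {n m p q : ℕ}
    (A : Matrix (Fin n) (Fin n) ℝ) (B : Matrix (Fin n) (Fin m) ℝ)
    (C : Matrix (Fin p) (Fin n) ℝ) (Ar : Matrix (Fin q) (Fin q) ℝ)
    (K : Matrix (Fin m) (Fin n) ℝ)
    (hrank : ∀ lam ∈ spectrum ℂ (Ar.map Complex.ofReal),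
      (Matrix.fromBlocks (A.map Complex.ofReal - lam • 1) (B.map Complex.ofReal)
        (C.map Complex.ofReal) 0).rank = n + p)
    (hK : IsHurwitz (A + B * K))
    (hAr : ∀ μ ∈ spectrum ℂ (Ar.map Complex.ofReal), 0 ≤ μ.re) :
    ∀ Cr : Matrix (Fin p) (Fin q) ℝ,
      ∃ (X : Matrix (Fin n) (Fin q) ℝ) (Kr : Matrix (Fin m) (Fin q) ℝ),
        X * Ar = (A + B * K) * X + B * Kr ∧ C * X = Cr := by
  intro Cr
  obtain ⟨X, U, h1, h2⟩ := francis_complex (A.map Complex.ofReal) (B.map Complex.ofReal)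
    (C.map Complex.ofReal) (Ar.map Complex.ofReal) hrank (Cr.map Complex.ofReal)
  set Xr := X.map Complex.re with hXr
  set Ur := U.map Complex.re with hUr
  have h1' : Xr * Ar = A * Xr + B * Ur := by
    have := congrArg (fun M => M.map Complex.re) h1
    simpa only [map_re_add, map_re_mul_right, map_re_mul_left] using this
  have h2' : C * Xr = Cr := by
    have := congrArg (fun M => M.map Complex.re) h2
    simp only [map_re_mul_left] at this
    simpa [Function.comp_def] using this
  refine ⟨Xr, Ur - K * Xr, ?_, h2'⟩
  rw [Matrix.add_mul, Matrix.mul_sub, Matrix.mul_assoc, h1']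
  abel
end

section
/- Two block matrices R and 𝓡 as defined below are mutual inverses: with Γ = (D₁₁₁₂ᵀD₁₁₁₂ − γ²I)⁻¹, R = [[D₁₁ᵀ;D₁₂ᵀ]][D₁₁, D₁₂] − diag(γ²I, 0) where D₁₁ = [[0, D₁₁₁₂],[0, D₁₁₂₂]] and D₁₂ = [0; I], satisfies R·𝓡 = 𝓡·R = I for 𝓡 = [[−γ⁻²I, 0, 0],[0, Γ, −ΓD₁₁₂₂ᵀ],[0, −D₁₁₂₂Γ, I + D₁₁₂₂ΓD₁₁₂₂ᵀ]], provided γ > σ̄(D₁₁₁₂). -/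
open Matrix

lemma myFromRows_add {m₁ m₂ n : Type*} (A₁ : Matrix m₁ n ℝ) (A₂ : Matrix m₂ n ℝ)
    (B₁ : Matrix m₁ n ℝ) (B₂ : Matrix m₂ n ℝ) :
    fromRows A₁ A₂ + fromRows B₁ B₂ = fromRows (A₁ + B₁) (A₂ + B₂) := by
  ext (i | i) j <;> rfl

lemma myFromColumns_add {m n₁ n₂ : Type*} (A₁ : Matrix m n₁ ℝ) (A₂ : Matrix m n₂ ℝ)
    (B₁ : Matrix m n₁ ℝ) (B₂ : Matrix m n₂ ℝ) :
    fromCols A₁ A₂ + fromCols B₁ B₂ = fromCols (A₁ + B₁) (A₂ + B₂) := by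
  ext i (j | j) <;> rfl

lemma my_helper_left {p m k : ℕ} (γ : ℝ) (hγ : γ ≠ 0)
    (S Γ : Matrix (Fin p) (Fin p) ℝ) (B : Matrix (Fin m) (Fin p) ℝ)
    (h1 : S * Γ = 1) :
    (fromBlocks (fromBlocks (-(γ ^ 2 • 1)) 0 0 (S + Bᵀ * B)) (fromRows 0 Bᵀ)
        (fromCols 0 B) 1 :
      Matrix ((Fin k ⊕ Fin p) ⊕ Fin m) ((Fin k ⊕ Fin p) ⊕ Fin m) ℝ) *
      fromBlocks (fromBlocks (-((γ ^ 2)⁻¹ • 1)) 0 0 Γ) (fromRows 0 (-(Γ * Bᵀ)))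
        (fromCols 0 (-(B * Γ))) (1 + B * Γ * Bᵀ) = 1 := by
  have hγ2 : γ ^ 2 * (γ ^ 2)⁻¹ = 1 := mul_inv_cancel₀ (pow_ne_zero 2 hγ)
  have hsΓB : S * (Γ * Bᵀ) = Bᵀ := by rw [← Matrix.mul_assoc, h1, Matrix.one_mul]
  rw [fromBlocks_multiply, ← fromBlocks_one, fromBlocks_inj]
  refine ⟨?_, ?_, ?_, ?_⟩
  · rw [fromBlocks_multiply, fromRows_mul_fromCols, fromBlocks_add, ← fromBlocks_one, fromBlocks_inj]
    refine ⟨?_, ?_, ?_, ?_⟩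
    · simp [Matrix.smul_mul, Matrix.mul_smul, smul_smul, mul_inv_cancel₀ (pow_ne_zero 2 hγ),
        inv_mul_cancel₀ (pow_ne_zero 2 hγ)]
    · simp
    · simp
    · simp only [Matrix.add_mul, h1, Matrix.mul_neg, Matrix.mul_assoc, Matrix.zero_mul,
        zero_add]
      abel
  · rw [fromBlocks_mul_fromRows, fromRows_mul, myFromRows_add]
    rw [show (0 : Matrix (Fin k ⊕ Fin p) (Fin m) ℝ) = fromRows 0 0 from fromRows_zero.symm, fromRows_ext_iff]
    constructor
    · simp
    · simp only [Matrix.mul_neg, Matrix.add_mul, hsΓB, Matrix.mul_add, Matrix.mul_one,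
        Matrix.mul_assoc, Matrix.zero_mul, zero_add]
      abel
  · rw [fromCols_mul_fromBlocks, Matrix.one_mul, myFromColumns_add]
    rw [show (0 : Matrix (Fin m) (Fin k ⊕ Fin p) ℝ) = fromCols 0 0 from fromCols_zero.symm, fromCols_ext_iff]
    constructor
    · simp
    · simp
  · rw [fromCols_mul_fromRows, Matrix.one_mul]
    simp only [Matrix.zero_mul, Matrix.mul_neg, zero_add, Matrix.mul_assoc]
    abel

lemma my_helper_right {p m k : ℕ} (γ : ℝ) (hγ : γ ≠ 0)
    (S Γ : Matrix (Fin p) (Fin p) ℝ) (B : Matrix (Fin m) (Fin p) ℝ)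
    (h2 : Γ * S = 1) :
    (fromBlocks (fromBlocks (-((γ ^ 2)⁻¹ • 1)) 0 0 Γ) (fromRows 0 (-(Γ * Bᵀ)))
        (fromCols 0 (-(B * Γ))) (1 + B * Γ * Bᵀ) :
      Matrix ((Fin k ⊕ Fin p) ⊕ Fin m) ((Fin k ⊕ Fin p) ⊕ Fin m) ℝ) *
      fromBlocks (fromBlocks (-(γ ^ 2 • 1)) 0 0 (S + Bᵀ * B)) (fromRows 0 Bᵀ)
        (fromCols 0 B) 1 = 1 := by
  have hγ2 : (γ ^ 2)⁻¹ * γ ^ 2 = 1 := inv_mul_cancel₀ (pow_ne_zero 2 hγ)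
  have hBΓS : B * Γ * S = B := by rw [Matrix.mul_assoc, h2, Matrix.mul_one]
  rw [fromBlocks_multiply, ← fromBlocks_one, fromBlocks_inj]
  refine ⟨?_, ?_, ?_, ?_⟩
  · rw [fromBlocks_multiply, fromRows_mul_fromCols, fromBlocks_add, ← fromBlocks_one, fromBlocks_inj]
    refine ⟨?_, ?_, ?_, ?_⟩
    · simp [Matrix.smul_mul, Matrix.mul_smul, smul_smul, mul_inv_cancel₀ (pow_ne_zero 2 hγ),
        inv_mul_cancel₀ (pow_ne_zero 2 hγ)]
    · simp
    · simp
    · simp only [Matrix.mul_add, h2, Matrix.neg_mul, Matrix.zero_mul, zero_add,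
        ← Matrix.mul_assoc]
      abel
  · rw [fromBlocks_mul_fromRows, fromRows_mul, myFromRows_add]
    rw [show (0 : Matrix (Fin k ⊕ Fin p) (Fin m) ℝ) = fromRows 0 0 from fromRows_zero.symm, fromRows_ext_iff]
    constructor
    · simp
    · simp
  · rw [fromCols_mul_fromBlocks, mul_fromCols, myFromColumns_add]
    rw [show (0 : Matrix (Fin m) (Fin k ⊕ Fin p) ℝ) = fromCols 0 0 from fromCols_zero.symm, fromCols_ext_iff]
    constructor
    · simp
    · simp only [Matrix.neg_mul, Matrix.mul_add, hBΓS, Matrix.add_mul, Matrix.one_mul,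
        ← Matrix.mul_assoc, Matrix.zero_mul, zero_add]
      abel
  · rw [fromCols_mul_fromRows]
    simp only [Matrix.zero_mul, Matrix.neg_mul, Matrix.mul_one, zero_add]
    abel

/-- The block matrices `R` and `𝓡` from the H∞ controller construction are
mutual inverses, provided `γ` exceeds the largest singular value of `D₁₁₁₂`
(expressed as `γ²I − D₁₁₁₂ᵀD₁₁₁₂ ≻ 0`). Here the column split of `D₁₁` is
`(k, p)` with `k = m₁ − p`, and its row split is `(2p − m, m)`. -/
theorem R_calR_mutual_inverses {p m k : ℕ} (γ : ℝ) (hγ : 0 < γ)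
    (D1112 : Matrix (Fin (2 * p - m)) (Fin p) ℝ)
    (D1122 : Matrix (Fin m) (Fin p) ℝ)
    (hσ : (γ ^ 2 • (1 : Matrix (Fin p) (Fin p) ℝ) - D1112ᵀ * D1112).PosDef) :
    let Γ : Matrix (Fin p) (Fin p) ℝ := (D1112ᵀ * D1112 - γ ^ 2 • 1)⁻¹
    let D11 : Matrix (Fin (2 * p - m) ⊕ Fin m) (Fin k ⊕ Fin p) ℝ :=
      Matrix.fromBlocks 0 D1112 0 D1122
    let D12 : Matrix (Fin (2 * p - m) ⊕ Fin m) (Fin m) ℝ := Matrix.fromRows 0 1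
    let R : Matrix ((Fin k ⊕ Fin p) ⊕ Fin m) ((Fin k ⊕ Fin p) ⊕ Fin m) ℝ :=
      Matrix.fromBlocks (D11ᵀ * D11) (D11ᵀ * D12) (D12ᵀ * D11) (D12ᵀ * D12)
        - Matrix.fromBlocks (γ ^ 2 • 1) 0 0 0
    let calR : Matrix ((Fin k ⊕ Fin p) ⊕ Fin m) ((Fin k ⊕ Fin p) ⊕ Fin m) ℝ :=
      Matrix.fromBlocks
        (Matrix.fromBlocks (-((γ ^ 2)⁻¹ • 1)) 0 0 Γ)
        (Matrix.fromRows 0 (-(Γ * D1122ᵀ)))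
        (Matrix.fromCols 0 (-(D1122 * Γ)))
        (1 + D1122 * Γ * D1122ᵀ)
    R * calR = 1 ∧ calR * R = 1 := by
  intro Γ D11 D12 R calR
  have hγ' : γ ≠ 0 := hγ.ne'
  have hdet : IsUnit (D1112ᵀ * D1112 - γ ^ 2 • 1).det := by
    have hneg : D1112ᵀ * D1112 - γ ^ 2 • 1 = -(γ ^ 2 • 1 - D1112ᵀ * D1112) :=
      (neg_sub _ _).symm
    rw [hneg, det_neg]
    have hd := hσ.det_pos
    simp only [isUnit_iff_ne_zero]
    intro h
    rcases mul_eq_zero.mp h with h | h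
    · exact pow_ne_zero _ (by norm_num : (-1 : ℝ) ≠ 0) h
    · exact hd.ne' h
  have h1 : (D1112ᵀ * D1112 - γ ^ 2 • 1) * Γ = 1 := mul_nonsing_inv _ hdet
  have h2 : Γ * (D1112ᵀ * D1112 - γ ^ 2 • 1) = 1 := nonsing_inv_mul _ hdet
  have hR : R = fromBlocks
      (fromBlocks (-(γ ^ 2 • 1)) 0 0 ((D1112ᵀ * D1112 - γ ^ 2 • 1) + D1122ᵀ * D1122))
      (fromRows 0 D1122ᵀ) (fromCols 0 D1122) 1 := by
    show Matrix.fromBlocks (D11ᵀ * D11) (D11ᵀ * D12) (D12ᵀ * D11) (D12ᵀ * D12)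
        - Matrix.fromBlocks (γ ^ 2 • 1) 0 0 0 = _
    show Matrix.fromBlocks ((Matrix.fromBlocks 0 D1112 0 D1122)ᵀ * Matrix.fromBlocks 0 D1112 0 D1122)
        ((Matrix.fromBlocks 0 D1112 0 D1122)ᵀ * Matrix.fromRows 0 1)
        ((Matrix.fromRows 0 1)ᵀ * Matrix.fromBlocks 0 D1112 0 D1122)
        ((Matrix.fromRows 0 1)ᵀ * Matrix.fromRows 0 1)
        - Matrix.fromBlocks (γ ^ 2 • 1) 0 0 0 = _
    rw [fromBlocks_transpose, transpose_fromRows, fromBlocks_multiply,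
      fromBlocks_mul_fromRows, fromCols_mul_fromBlocks, fromCols_mul_fromRows]
    rw [show (1 : Matrix (Fin k ⊕ Fin p) (Fin k ⊕ Fin p) ℝ) = fromBlocks 1 0 0 1 from
      fromBlocks_one.symm, fromBlocks_smul, sub_eq_add_neg, fromBlocks_neg, fromBlocks_add]
    simp only [transpose_zero, transpose_one, Matrix.zero_mul, Matrix.mul_zero, Matrix.one_mul,
      Matrix.mul_one, add_zero, zero_add, smul_zero, neg_zero, fromBlocks_add, fromBlocks_inj]
    refine ⟨?_, trivial, trivial, trivial⟩
    rw [fromBlocks_neg, fromBlocks_add, fromBlocks_inj]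
    refine ⟨?_, ?_, ?_, ?_⟩ <;> abel
  rw [hR]
  exact ⟨my_helper_left γ hγ' _ Γ D1122 h1, my_helper_right γ hγ' _ Γ D1122 h2⟩
end
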